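/- For every θ ∈ [0,1], the linear map A_θ : γ(θ)^⊥ → ℝ² given by A_θ(q) = (q·(θ,1,0), q·(0,θ/2,1)), where γ(θ) = (1, −θ, θ²/2)/‖(1, −θ, θ²/2)‖, is invertible, and both A_θ and its inverse are Lipschitz with constant at most 100 (with respect to the Euclidean norms), uniformly in θ ∈ [0,1]. -/

import Mathlib

/-- The map `A_θ : q ↦ (θq₁ + q₂, (θ/2)q₂ + q₃)`. -/
noncomputable def Amap (θ : ℝ) (q : EuclideanSpace ℝ (Fin 3)) : EuclideanSpace ℝ (Fin 2) :=
  WithLp.toLp 2 ![θ * q 0 + q 1, (θ / 2) * q 1 + q 2]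

private lemma sqrt_le_100 (x y : ℝ) (h : x ≤ 10000 * y) (hy : 0 ≤ y) :
    Real.sqrt x ≤ 100 * Real.sqrt y := by
  have : Real.sqrt x ≤ Real.sqrt (10000 * y) := Real.sqrt_le_sqrt h
  rwa [Real.sqrt_mul (by norm_num : (0:ℝ) ≤ 10000),
    show Real.sqrt 10000 = 100 by
      rw [show (10000:ℝ) = 100 ^ 2 by norm_num, Real.sqrt_sq (by norm_num)]] at this

private lemma forward (θ a0 a1 a2 : ℝ) (h0 : 0 ≤ θ) (h1 : θ ≤ 1) :
    (θ * a0 + a1) ^ 2 + (θ / 2 * a1 + a2) ^ 2 ≤ 10000 * (a0 ^ 2 + a1 ^ 2 + a2 ^ 2) := by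
  have hθ2 : (0:ℝ) ≤ 1 - θ ^ 2 := by nlinarith
  have f1 : (θ * a0 + a1) ^ 2 ≤ 2 * a0 ^ 2 + 2 * a1 ^ 2 := by
    nlinarith [sq_nonneg (θ * a0 - a1), mul_nonneg hθ2 (sq_nonneg a0), sq_nonneg a1]
  have f2 : (θ / 2 * a1 + a2) ^ 2 ≤ 2 * a1 ^ 2 + 2 * a2 ^ 2 := by
    nlinarith [sq_nonneg (θ / 2 * a1 - a2), mul_nonneg hθ2 (sq_nonneg a1), sq_nonneg a2,
      sq_nonneg a1]
  nlinarith [f1, f2, sq_nonneg a0, sq_nonneg a1, sq_nonneg a2]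

set_option maxHeartbeats 1000000 in
private lemma backward (θ a0 a1 a2 : ℝ) (h0 : 0 ≤ θ) (h1 : θ ≤ 1)
    (hp : a0 * 1 + a1 * (-θ) + a2 * (θ ^ 2 / 2) = 0) :
    a0 ^ 2 + a1 ^ 2 + a2 ^ 2 ≤ 10000 * ((θ * a0 + a1) ^ 2 + (θ / 2 * a1 + a2) ^ 2) := by
  have ha0 : a0 = θ * a1 - θ ^ 2 / 2 * a2 := by linarith
  obtain ⟨u, hu⟩ : ∃ u, u = θ * a0 + a1 := ⟨_, rfl⟩
  obtain ⟨v, hv⟩ : ∃ v, v = θ / 2 * a1 + a2 := ⟨_, rfl⟩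
  rw [← hu, ← hv]
  have hθ2 : (0:ℝ) ≤ 1 - θ ^ 2 := by nlinarith
  have hθ4 : (0:ℝ) ≤ 1 - θ ^ 4 := by nlinarith
  have hθ6 : (0:ℝ) ≤ 1 - θ ^ 6 := by nlinarith
  have e1 : (1 + θ ^ 2 + θ ^ 4 / 4) * a1 = u + θ ^ 3 / 2 * v := by
    rw [hu, hv, ha0]; ring
  have e2 : (1 + θ ^ 2 + θ ^ 4 / 4) * a2 = (1 + θ ^ 2) * v - θ / 2 * u := by
    rw [hu, hv, ha0]; ring
  have hx : (0:ℝ) ≤ θ ^ 2 + θ ^ 4 / 4 := by positivity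
  have hsq : (1:ℝ) ≤ (1 + θ ^ 2 + θ ^ 4 / 4) ^ 2 := by nlinarith [hx, sq_nonneg (θ ^ 2 + θ ^ 4 / 4)]
  have b1 : a1 ^ 2 ≤ (u + θ ^ 3 / 2 * v) ^ 2 := by
    rw [← e1]
    nlinarith [mul_nonneg (by linarith : (0:ℝ) ≤ (1 + θ ^ 2 + θ ^ 4 / 4) ^ 2 - 1) (sq_nonneg a1)]
  have b2 : a2 ^ 2 ≤ ((1 + θ ^ 2) * v - θ / 2 * u) ^ 2 := by
    rw [← e2]
    nlinarith [mul_nonneg (by linarith : (0:ℝ) ≤ (1 + θ ^ 2 + θ ^ 4 / 4) ^ 2 - 1) (sq_nonneg a2)]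
  have c1 : a1 ^ 2 ≤ 2 * u ^ 2 + v ^ 2 := by
    nlinarith [b1, sq_nonneg (u - θ ^ 3 / 2 * v), mul_nonneg hθ6 (sq_nonneg v), sq_nonneg v,
      sq_nonneg u]
  have c2 : a2 ^ 2 ≤ u ^ 2 + 8 * v ^ 2 := by
    have h4 : (1 + θ ^ 2) ^ 2 ≤ 4 := by nlinarith
    nlinarith [b2, sq_nonneg ((1 + θ ^ 2) * v + θ / 2 * u),
      mul_nonneg (by linarith : (0:ℝ) ≤ 4 - (1 + θ ^ 2) ^ 2) (sq_nonneg v),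
      mul_nonneg hθ2 (sq_nonneg u), sq_nonneg u, sq_nonneg v]
  have b0 : a0 ^ 2 ≤ 2 * (a1 ^ 2 + a2 ^ 2) := by
    rw [ha0]
    nlinarith [mul_nonneg hθ2 (sq_nonneg a1), mul_nonneg hθ4 (sq_nonneg a2),
      mul_nonneg (pow_nonneg h0 3) (sq_nonneg (a1 + a2)),
      mul_nonneg (by nlinarith : (0:ℝ) ≤ 1 - θ ^ 3) (add_nonneg (sq_nonneg a1) (sq_nonneg a2)),
      sq_nonneg a2]
  nlinarith [b0, c1, c2, sq_nonneg u, sq_nonneg v]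

/-- For every `θ ∈ [0,1]`, the restriction of `A_θ` to `γ(θ)^⊥`
(the plane `q₁ - θq₂ + (θ²/2)q₃ = 0`) is a bijection onto `ℝ²`, and both it and its
inverse are `100`-Lipschitz, uniformly in `θ`. -/
theorem stmt15 (θ : ℝ) (hθ : θ ∈ Set.Icc (0 : ℝ) 1) :
    (∀ q q' : EuclideanSpace ℝ (Fin 3),
      q 0 * 1 + q 1 * (-θ) + q 2 * (θ ^ 2 / 2) = 0 →
      q' 0 * 1 + q' 1 * (-θ) + q' 2 * (θ ^ 2 / 2) = 0 →
      dist (Amap θ q) (Amap θ q') ≤ 100 * dist q q' ∧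
      dist q q' ≤ 100 * dist (Amap θ q) (Amap θ q')) ∧
    (∀ w : EuclideanSpace ℝ (Fin 2), ∃! q : EuclideanSpace ℝ (Fin 3),
      q 0 * 1 + q 1 * (-θ) + q 2 * (θ ^ 2 / 2) = 0 ∧ Amap θ q = w) := by
  obtain ⟨h0, h1⟩ := hθ
  have lip : ∀ q q' : EuclideanSpace ℝ (Fin 3),
      q 0 * 1 + q 1 * (-θ) + q 2 * (θ ^ 2 / 2) = 0 →
      q' 0 * 1 + q' 1 * (-θ) + q' 2 * (θ ^ 2 / 2) = 0 →
      dist (Amap θ q) (Amap θ q') ≤ 100 * dist q q' ∧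
      dist q q' ≤ 100 * dist (Amap θ q) (Amap θ q') := by
    intro q q' hq hq'
    have hp : (q 0 - q' 0) * 1 + (q 1 - q' 1) * (-θ) + (q 2 - q' 2) * (θ ^ 2 / 2) = 0 := by
      linarith
    have hd3 : dist q q' =
        Real.sqrt ((q 0 - q' 0) ^ 2 + (q 1 - q' 1) ^ 2 + (q 2 - q' 2) ^ 2) := by
      rw [EuclideanSpace.dist_eq, Fin.sum_univ_three]
      simp [Real.dist_eq, sq_abs]
    have hd2 : dist (Amap θ q) (Amap θ q') =
        Real.sqrt ((θ * (q 0 - q' 0) + (q 1 - q' 1)) ^ 2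
          + (θ / 2 * (q 1 - q' 1) + (q 2 - q' 2)) ^ 2) := by
      rw [EuclideanSpace.dist_eq, Fin.sum_univ_two]
      simp only [Amap, WithLp.ofLp_toLp, PiLp.toLp_apply, Matrix.cons_val_zero, Matrix.cons_val_one, Matrix.head_cons,
        Real.dist_eq, sq_abs]
      ring_nf
    rw [hd2, hd3]
    constructor
    · exact sqrt_le_100 _ _ (forward θ _ _ _ h0 h1) (by positivity)
    · exact sqrt_le_100 _ _ (backward θ _ _ _ h0 h1 hp) (by positivity)
  refine ⟨lip, ?_⟩
  intro w
  set D := 1 + θ ^ 2 + θ ^ 4 / 4 with hD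
  have hDpos : 0 < D := by positivity
  set p1 := (w 0 + θ ^ 3 / 2 * w 1) / D with hp1
  set p2 := ((1 + θ ^ 2) * w 1 - θ / 2 * w 0) / D with hp2
  refine ⟨WithLp.toLp 2 ![θ * p1 - θ ^ 2 / 2 * p2, p1, p2], ⟨?_, ?_⟩, ?_⟩
  · show (θ * p1 - θ ^ 2 / 2 * p2) * 1 + p1 * (-θ) + p2 * (θ ^ 2 / 2) = 0
    ring
  · ext i
    fin_cases i
    · show θ * (θ * p1 - θ ^ 2 / 2 * p2) + p1 = w 0
      rw [hp1, hp2]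
      field_simp
      ring
    · show θ / 2 * p1 + p2 = w 1
      rw [hp1, hp2]
      field_simp
      ring
  · rintro q ⟨hq, hAq⟩
    have hq' : (θ * p1 - θ ^ 2 / 2 * p2) * 1 + p1 * (-θ) + p2 * (θ ^ 2 / 2) = 0 := by ring
    have hAq' : Amap θ (WithLp.toLp 2 ![θ * p1 - θ ^ 2 / 2 * p2, p1, p2]) = w := by
      ext i
      fin_cases i
      · show θ * (θ * p1 - θ ^ 2 / 2 * p2) + p1 = w 0
        rw [hp1, hp2]; field_simp; ring
      · show θ / 2 * p1 + p2 = w 1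
        rw [hp1, hp2]; field_simp; ring
    have := (lip q (WithLp.toLp 2 ![θ * p1 - θ ^ 2 / 2 * p2, p1, p2]) hq hq').2
    rw [hAq, hAq', dist_self, mul_zero] at this
    exact dist_le_zero.mp this
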